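/- Let s > 0 be a real number and let P be a real polynomial function, written as P(x) = Σ_j c_j (s - x)^j; let m̃ be the smallest index with c_{m̃} ≠ 0. Then (-κ)^{m̃+1} · e^{κs} · ∫_0^s e^{-κx} P(x) dx tends to m̃! · c_{m̃} as κ → -∞. -/

import Mathlib

open MeasureTheory Filter Set

lemma aux_integrable (n : ℕ) :
    MeasureTheory.IntegrableOn (fun t : ℝ => Real.exp (-t) * t ^ n) (Set.Ioi 0) := by
  have h := Real.GammaIntegral_convergent (s := (n : ℝ) + 1) (by positivity)
  refine h.congr_fun ?_ measurableSet_Ioi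
  intro x hx
  norm_num [Real.rpow_natCast]

lemma aux_integral (n : ℕ) :
    ∫ t in Set.Ioi (0:ℝ), Real.exp (-t) * t ^ n = n.factorial := by
  have h := Real.Gamma_eq_integral (s := (n : ℝ) + 1) (by positivity)
  rw [← Real.Gamma_nat_eq_factorial, h]
  norm_num [Real.rpow_natCast]

lemma aux_tendstoG (s : ℝ) (hs : 0 < s) (n : ℕ) :
    Filter.Tendsto (fun κ : ℝ => ∫ t in (0:ℝ)..(-κ * s), Real.exp (-t) * t ^ n)
      Filter.atBot (nhds (n.factorial : ℝ)) := by
  have hb : Tendsto (fun κ : ℝ => -κ * s) atBot atTop :=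
    (tendsto_neg_atBot_atTop).atTop_mul_const hs
  have := MeasureTheory.intervalIntegral_tendsto_integral_Ioi 0 (aux_integrable n) hb
  rwa [aux_integral n] at this

lemma aux_sub (s : ℝ) (n : ℕ) {κ : ℝ} (hκ : κ < 0) :
    ∫ u in (0:ℝ)..s, Real.exp (κ * u) * u ^ n =
      ((-κ)⁻¹) ^ (n + 1) * ∫ t in (0:ℝ)..(-κ * s), Real.exp (-t) * t ^ n := by
  have hne : (-κ) ≠ 0 := neg_ne_zero.mpr hκ.ne
  have h := intervalIntegral.integral_comp_mul_left
    (fun t : ℝ => Real.exp (-t) * t ^ n) (a := 0) (b := s) hne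
  simp only [mul_zero, smul_eq_mul] at h
  have h2 : (∫ x in (0:ℝ)..s, Real.exp (-(-κ * x)) * (-κ * x) ^ n)
      = (-κ) ^ n * ∫ x in (0:ℝ)..s, Real.exp (κ * x) * x ^ n := by
    rw [← intervalIntegral.integral_const_mul]
    congr 1 with x
    rw [mul_pow]
    ring_nf
  rw [h2] at h
  field_simp at h
  have hJ : (∫ t in (0:ℝ)..(-κ * s), Real.exp (-t) * t ^ n)
      = (-κ) ^ (n + 1) * ∫ u in (0:ℝ)..s, Real.exp (κ * u) * u ^ n := by
    rw [show (-κ) * s = -(κ * s) from neg_mul κ s]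
    rw [pow_succ, mul_comm ((-κ) ^ n) (-κ), mul_assoc, h]
    field_simp
    rw [mul_div_cancel_left₀ _ hκ.ne]
  rw [hJ, inv_pow, inv_mul_cancel_left₀ (pow_ne_zero _ hne)]

theorem stmt_2 (s : ℝ) (hs : 0 < s) (mt d : ℕ) (hmd : mt ≤ d) (c : ℕ → ℝ) (hc : c mt ≠ 0)
    (P : ℝ → ℝ) (hP : ∀ x, P x = ∑ j ∈ Finset.Icc mt d, c j * (s - x) ^ j) :
    Filter.Tendsto (fun κ : ℝ => (-κ) ^ (mt + 1) * Real.exp (κ * s) *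
        ∫ x in (0:ℝ)..s, Real.exp (-κ * x) * P x)
      Filter.atBot (nhds ((Nat.factorial mt : ℝ) * c mt)) := by
  set G : ℕ → ℝ → ℝ := fun n κ => ∫ t in (0:ℝ)..(-κ * s), Real.exp (-t) * t ^ n with hG
  set F : ℝ → ℝ := fun κ => ∑ j ∈ Finset.Icc mt d,
      c j * (((-κ)⁻¹) ^ (j - mt) * G j κ) with hF
  have hterm : ∀ j ∈ Finset.Icc mt d,
      Tendsto (fun κ : ℝ => c j * (((-κ)⁻¹) ^ (j - mt) * G j κ)) atBot
        (nhds (if j = mt then (Nat.factorial mt : ℝ) * c mt else 0)) := by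
    intro j hj
    rw [Finset.mem_Icc] at hj
    by_cases hjm : j = mt
    · subst hjm
      simp only [if_pos, Nat.sub_self, pow_zero, one_mul]
      rw [show ((j.factorial : ℝ) * c j) = c j * (j.factorial : ℝ) from mul_comm _ _]
      exact (aux_tendstoG s hs j).const_mul (c j)
    · simp only [if_neg hjm]
      have hk : 0 < j - mt := Nat.sub_pos_of_lt (lt_of_le_of_ne hj.1 (Ne.symm hjm))
      have h1 : Tendsto (fun κ : ℝ => ((-κ)⁻¹) ^ (j - mt)) atBot (nhds 0) := by
        have h0 : Tendsto (fun κ : ℝ => (-κ)⁻¹) atBot (nhds 0) :=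
          tendsto_inv_atTop_zero.comp tendsto_neg_atBot_atTop
        simpa [zero_pow hk.ne'] using h0.pow (j - mt)
      have h2 := ((h1.mul (aux_tendstoG s hs j)).const_mul (c j))
      simpa only [zero_mul, mul_zero] using h2
  have hmain : Tendsto F atBot (nhds ((Nat.factorial mt : ℝ) * c mt)) := by
    have h := tendsto_finset_sum (Finset.Icc mt d) hterm
    have hsum : (∑ j ∈ Finset.Icc mt d,
        if j = mt then (Nat.factorial mt : ℝ) * c mt else 0)
        = (Nat.factorial mt : ℝ) * c mt := by
      rw [Finset.sum_ite_eq' (Finset.Icc mt d) mt]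
      simp [Finset.mem_Icc, hmd]
    rwa [hsum] at h
  refine hmain.congr' ?_
  filter_upwards [eventually_lt_atBot (0:ℝ)] with κ hκ
  have hne : (-κ) ≠ 0 := neg_ne_zero.mpr hκ.ne
  have hint : ∫ x in (0:ℝ)..s, Real.exp (-κ * x) * P x
      = ∑ j ∈ Finset.Icc mt d, c j * (Real.exp (-κ * s) *
          ∫ u in (0:ℝ)..s, Real.exp (κ * u) * u ^ j) := by
    have h1 : ∀ x, Real.exp (-κ * x) * P x
        = ∑ j ∈ Finset.Icc mt d, c j * (Real.exp (-κ * x) * (s - x) ^ j) := by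
      intro x; rw [hP x, Finset.mul_sum]; congr 1 with j; ring
    rw [intervalIntegral.integral_congr (g := fun x => ∑ j ∈ Finset.Icc mt d,
        c j * (Real.exp (-κ * x) * (s - x) ^ j)) (fun x _ => h1 x)]
    rw [intervalIntegral.integral_finset_sum]
    · refine Finset.sum_congr rfl fun j hj => ?_
      rw [intervalIntegral.integral_const_mul]
      congr 1
      have h2 : ∀ x : ℝ, Real.exp (-κ * x) * (s - x) ^ j
          = (fun u => Real.exp (-κ * s) * (Real.exp (κ * u) * u ^ j)) (s - x) := by
        intro x
        simp only
        have harg : -κ * x = -κ * s + κ * (s - x) := by ring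
        rw [← mul_assoc, ← Real.exp_add, ← harg]
      rw [intervalIntegral.integral_congr (fun x _ => h2 x),
        intervalIntegral.integral_comp_sub_left
          (fun u => Real.exp (-κ * s) * (Real.exp (κ * u) * u ^ j)) s]
      simp [intervalIntegral.integral_const_mul]
    · intro j hj
      exact (Continuous.intervalIntegrable (by continuity) _ _)
  show F κ = _
  rw [hint, Finset.mul_sum, hF]
  refine Finset.sum_congr rfl fun j hj => ?_
  have hj1 : mt ≤ j := (Finset.mem_Icc.mp hj).1
  rw [aux_sub s j hκ]
  have hsplit : ((-κ)⁻¹ : ℝ) ^ (j + 1) = ((-κ)⁻¹) ^ (mt + 1) * ((-κ)⁻¹) ^ (j - mt) := by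
    rw [← pow_add]; congr 1; omega
  have hcancel : ((-κ) : ℝ) ^ (mt + 1) * ((-κ)⁻¹) ^ (mt + 1) = 1 := by
    rw [← mul_pow, mul_inv_cancel₀ hne, one_pow]
  have he : Real.exp (κ * s) * Real.exp (-κ * s) = 1 := by
    rw [← Real.exp_add]; norm_num
  rw [hsplit]
  rw [show (-κ:ℝ) ^ (mt + 1) * Real.exp (κ * s) * (c j * (Real.exp (-κ * s) *
      (((-κ)⁻¹) ^ (mt + 1) * ((-κ)⁻¹) ^ (j - mt) * G j κ)))
      = (Real.exp (κ * s) * Real.exp (-κ * s)) * (((-κ) ^ (mt + 1) * ((-κ)⁻¹) ^ (mt + 1)) *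
        (c j * (((-κ)⁻¹) ^ (j - mt) * G j κ))) from by ring, he, hcancel]
  ring
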